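/- Let p be a prime, q a non-square power of p, and π = ζ_m^ν √q a supersingular q-number with ℚ(π) = ℚ(π²). Then for every prime v of the ring of integers of ℚ(π) lying over p, the ramification index e(v/p) is even. -/

import Mathlib

open NumberField

set_option synthInstance.maxHeartbeats 1000000
set_option maxHeartbeats 1000000

/-- Let `p` be a prime, `q` a non-square power of `p`, and `π = ζ_m^ν √q`
a supersingular `q`-number with `ℚ(π) = ℚ(π²)`.  Then for every prime `v` of the ring of
integers of `ℚ(π)` lying over `p`, the ramification index `e(v/p)` is even.
(We realize `ℚ(π)` as a number field `F` generated over `ℚ` by `π = ζ·s` with `ζ` a primitive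
`m`-th root of unity and `s² = q`; the field is independent of the choice of square root.) -/
theorem ramification_even (p k q m : ℕ) (hp : p.Prime) (hq : q = p ^ k) (hk : 0 < k)
    (hns : ¬ IsSquare q) (hm : 0 < m)
    (F : Type*) [Field F] [NumberField F]
    (ζ s π : F) (hζ : IsPrimitiveRoot ζ m) (hs : s ^ 2 = (q : F)) (hπ : π = ζ * s)
    (hgen : IntermediateField.adjoin ℚ ({π} : Set F) = ⊤)
    (hK : IntermediateField.adjoin ℚ ({π ^ 2} : Set F) = ⊤) :
    ∀ v : Ideal (𝓞 F), v.IsPrime →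
      Ideal.comap (algebraMap ℤ (𝓞 F)) v = Ideal.span ({(p : ℤ)} : Set ℤ) →
      2 ∣ Ideal.ramificationIdx' (Ideal.span ({(p : ℤ)} : Set ℤ)) v := by
  classical
  intro v hv hcomap
  -- k is odd
  have hkodd : Odd k := by
    rcases Nat.even_or_odd k with ⟨t, ht⟩ | ho
    · exact absurd ⟨p ^ t, by rw [hq, ht, ← pow_add]⟩ hns
    · exact ho
  -- integral elements
  have hζint : IsIntegral ℤ ζ := by
    refine ⟨Polynomial.X ^ m - 1, ?_, ?_⟩
    · simpa using Polynomial.monic_X_pow_sub_C (1 : ℤ) hm.ne'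
    · simp [hζ.pow_eq_one]
  have hsint : IsIntegral ℤ s := by
    refine ⟨Polynomial.X ^ 2 - Polynomial.C (q : ℤ), ?_, ?_⟩
    · exact Polynomial.monic_X_pow_sub_C _ two_ne_zero
    · simp [hs]
  set z : 𝓞 F := ⟨ζ, hζint⟩ with hz
  set y : 𝓞 F := ⟨s, hsint⟩ with hy
  set x : 𝓞 F := z * y with hx
  -- z is a unit
  have hzu : IsUnit z := by
    apply IsUnit.of_mul_eq_one (a := z) (z ^ (m - 1))
    have : (z : F) * (z : F) ^ (m - 1) = 1 := by
      rw [← pow_succ', Nat.sub_add_cancel hm]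
      exact hζ.pow_eq_one
    exact_mod_cast this
  -- key ideal identity
  have hx2 : x ^ 2 = z ^ 2 * (q : 𝓞 F) := by
    have : (x : F) ^ 2 = (z : F) ^ 2 * (q : F) := by
      push_cast [hx]
      rw [mul_pow]
      congr 1
    exact_mod_cast this
  have hP : Ideal.map (algebraMap ℤ (𝓞 F)) (Ideal.span ({(p : ℤ)} : Set ℤ))
      = Ideal.span ({(p : 𝓞 F)} : Set (𝓞 F)) := by
    rw [Ideal.map_span, Set.image_singleton]
    norm_cast
  have hideal : (Ideal.span ({x} : Set (𝓞 F))) ^ 2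
      = (Ideal.span ({(p : 𝓞 F)} : Set (𝓞 F))) ^ k := by
    rw [Ideal.span_singleton_pow, Ideal.span_singleton_pow, hx2, ← Nat.cast_pow, ← hq]
    exact Ideal.span_singleton_eq_span_singleton.mpr
      (associated_unit_mul_left _ _ (hzu.pow 2))
  -- nonzeroness
  have hqnat : q ≠ 0 := by
    rw [hq]; exact pow_ne_zero k hp.pos.ne'
  have hx0 : x ≠ 0 := by
    intro h
    rw [h] at hx2
    simp at hx2
    rcases hx2 with h' | h'
    · exact hzu.ne_zero h'
    · exact hqnat h'
  have hp0 : (p : 𝓞 F) ≠ 0 := by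
    exact_mod_cast Nat.cast_ne_zero.mpr hp.pos.ne'
  have hv0 : v ≠ ⊥ := by
    intro h
    rw [h] at hcomap
    have hmem : (p : ℤ) ∈ Ideal.comap (algebraMap ℤ (𝓞 F)) (⊥ : Ideal (𝓞 F)) :=
      hcomap ▸ Ideal.mem_span_singleton_self _
    rw [Ideal.mem_comap, Ideal.mem_bot] at hmem
    have : (p : 𝓞 F) = 0 := by simpa using hmem
    exact hp.pos.ne' (Nat.cast_eq_zero.mp this)
  have hPspan0 : Ideal.span ({(p : 𝓞 F)} : Set (𝓞 F)) ≠ ⊥ := by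
    simpa [Ideal.span_singleton_eq_bot] using hp0
  have hmap0 : Ideal.map (algebraMap ℤ (𝓞 F)) (Ideal.span ({(p : ℤ)} : Set ℤ)) ≠ ⊥ := by
    rw [hP]; exact hPspan0
  have hI0 : Ideal.span ({x} : Set (𝓞 F)) ≠ ⊥ := by
    simpa [Ideal.span_singleton_eq_bot] using hx0
  -- count argument
  have hecount := Ideal.IsDedekindDomain.ramificationIdx'_eq_normalizedFactors_count
    (p := Ideal.span ({(p : ℤ)} : Set ℤ)) (P := v) hmap0 hv hv0
  set e := Ideal.ramificationIdx' (Ideal.span ({(p : ℤ)} : Set ℤ)) v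
  set c := (UniqueFactorizationMonoid.normalizedFactors
    (Ideal.span ({x} : Set (𝓞 F)))).count v with hc
  have hcount : 2 * c = k * e := by
    have h1 : (UniqueFactorizationMonoid.normalizedFactors
        ((Ideal.span ({x} : Set (𝓞 F))) ^ 2)).count v = 2 * c := by
      rw [UniqueFactorizationMonoid.normalizedFactors_pow, Multiset.count_nsmul]
    have h2 : (UniqueFactorizationMonoid.normalizedFactors
        ((Ideal.span ({(p : 𝓞 F)} : Set (𝓞 F))) ^ k)).count v = k * e := by
      rw [UniqueFactorizationMonoid.normalizedFactors_pow, Multiset.count_nsmul, hecount, hP]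
    rw [← h1, ← h2, hideal]
  have h2dvd : 2 ∣ k * e := ⟨c, by omega⟩
  rcases (Nat.Prime.dvd_mul Nat.prime_two).mp h2dvd with h | h
  · obtain ⟨t, ht⟩ := hkodd
    omega
  · exact h
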